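/- Let $n \geq 1$ and work in the polynomial ring $\mathbb{Q}[x_1,\dots,x_n]$. For each $i \geq 1$, the elementary symmetric polynomial evaluated at the power series $1-e^{-x_1},\dots,1-e^{-x_n}$ satisfies $e_i(1-e^{-x_1},\ldots,1-e^{-x_n}) \equiv e_i(x_1,\ldots,x_n)$ modulo the ideal generated by the power sums $p_2,\dots,p_n$ together with the ideal $(x_1,\dots,x_n)^{n+1}$. -/

import Mathlib

open MvPolynomial Finset

/-- The `i`-th elementary symmetric polynomial evaluated at a family of ring elements. -/
noncomputable def esymmAt {n : ℕ} (v : Fin n → MvPolynomial (Fin n) ℚ) (i : ℕ) :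
    MvPolynomial (Fin n) ℚ :=
  ∑ s ∈ Finset.univ.powersetCard i, ∏ j ∈ s, v j

/-- Truncation of `e^{-x_j}` modulo total degree `n+1`. -/
noncomputable def expNegTrunc (n : ℕ) (j : Fin n) : MvPolynomial (Fin n) ℚ :=
  ∑ k ∈ Finset.range (n + 1), (((k.factorial : ℚ))⁻¹) • (-(X j)) ^ k

namespace EsymmAux

variable (n : ℕ)

/-- The modulus ideal. -/
noncomputable def Idl : Ideal (MvPolynomial (Fin n) ℚ) :=
  Ideal.span ((fun k => MvPolynomial.psum (Fin n) ℚ k) '' (Set.Icc 2 n)) ⊔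
    (Ideal.span (Set.range (X : Fin n → MvPolynomial (Fin n) ℚ))) ^ (n + 1)

lemma psum_mem {m : ℕ} (hm : 2 ≤ m) : psum (Fin n) ℚ m ∈ Idl n := by
  rcases le_or_gt m n with h | h
  · exact Ideal.mem_sup_left (Ideal.subset_span ⟨m, ⟨hm, h⟩, rfl⟩)
  · refine Ideal.mem_sup_right ?_
    rw [psum]
    refine Submodule.sum_mem _ fun j _ => ?_
    have h1 : (X j : MvPolynomial (Fin n) ℚ) ∈ Ideal.span (Set.range X) :=
      Ideal.subset_span ⟨j, rfl⟩
    have h2 : (X j : MvPolynomial (Fin n) ℚ) ^ m = X j ^ (m - (n + 1)) * X j ^ (n + 1) := by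
      rw [← pow_add]; congr 1; omega
    rw [h2]
    exact Ideal.mul_mem_left _ _ (Ideal.pow_mem_pow h1 _)

local notation "π" => Ideal.Quotient.mk (Idl n)

lemma key (h : Polynomial ℚ) :
    π (∑ j, Polynomial.aeval (X j) h) =
      π (C (h.coeff 0) * (n : MvPolynomial (Fin n) ℚ) + C (h.coeff 1) * psum (Fin n) ℚ 1) := by
  induction h using Polynomial.induction_on' with
  | add p q hp hq =>
      simp only [map_add, Finset.sum_add_distrib, Polynomial.coeff_add, C_add]
      rw [hp, hq, ← map_add, ← map_add]
      congr 1
      ring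
  | monomial m a =>
      have hs : (∑ j, Polynomial.aeval (X j) (Polynomial.monomial m a)) =
          C a * psum (Fin n) ℚ m := by
        rw [psum, Finset.mul_sum]
        refine Finset.sum_congr rfl fun j _ => ?_
        simp [Polynomial.aeval_monomial, algebraMap_eq]
      rw [hs]
      match m with
      | 0 =>
          simp [psum_zero, Polynomial.coeff_monomial]
      | 1 =>
          simp [Polynomial.coeff_monomial]
      | (m + 2) =>
          have h0 : (Polynomial.monomial (m + 2) a).coeff 0 = 0 := by
            simp [Polynomial.coeff_monomial]
          have h1 : (Polynomial.monomial (m + 2) a).coeff 1 = 0 := by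
            simp [Polynomial.coeff_monomial]
          rw [h0, h1, map_mul]
          have : π (psum (Fin n) ℚ (m + 2)) = 0 :=
            Ideal.Quotient.eq_zero_iff_mem.mpr (psum_mem n (by omega))
          simp [this]

/-- The single-variable polynomial describing `1 - e^{-x}` truncated. -/
noncomputable def gpoly : Polynomial ℚ :=
  1 - ∑ k ∈ Finset.range (n + 1), ((k.factorial : ℚ))⁻¹ • (-(Polynomial.X)) ^ k

lemma aeval_gpoly (j : Fin n) :
    Polynomial.aeval (X j) (gpoly n) = 1 - expNegTrunc n j := by
  simp [gpoly, expNegTrunc, map_sub, map_sum]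

lemma term_coeff (k m : ℕ) :
    ((((k.factorial : ℚ))⁻¹ • (-(Polynomial.X : Polynomial ℚ)) ^ k).coeff m) =
      if k = m then (-1) ^ k * ((k.factorial : ℚ))⁻¹ else 0 := by
  have h1 : (-(Polynomial.X : Polynomial ℚ)) ^ k = Polynomial.C ((-1 : ℚ) ^ k) * Polynomial.X ^ k := by
    rw [neg_pow, map_pow, map_neg, map_one]
  rw [Polynomial.coeff_smul, h1, Polynomial.coeff_C_mul, Polynomial.coeff_X_pow, smul_eq_mul]
  rcases eq_or_ne k m with rfl | hk
  · simp [mul_comm]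
  · simp [hk, Ne.symm hk]

lemma gpoly_coeff_zero : (gpoly n).coeff 0 = 0 := by
  have hn : 0 < n + 1 := Nat.succ_pos n
  simp only [gpoly, Polynomial.coeff_sub, Polynomial.coeff_one, Polynomial.finset_sum_coeff,
    term_coeff]
  rw [Finset.sum_ite_eq' (Finset.range (n + 1)) 0]
  simp [Finset.mem_range.mpr hn]

lemma gpoly_coeff_one (hn : 1 ≤ n) : (gpoly n).coeff 1 = 1 := by
  simp only [gpoly, Polynomial.coeff_sub, Polynomial.coeff_one, Polynomial.finset_sum_coeff,
    term_coeff]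
  rw [Finset.sum_ite_eq' (Finset.range (n + 1)) 1]
  simp [Finset.mem_range.mpr (by omega : 1 < n + 1)]

lemma gpow_coeff_zero (k : ℕ) (hk : 1 ≤ k) : ((gpoly n) ^ k).coeff 0 = 0 := by
  rw [Polynomial.coeff_zero_eq_eval_zero, Polynomial.eval_pow,
    ← Polynomial.coeff_zero_eq_eval_zero, gpoly_coeff_zero]
  exact zero_pow (by omega)

lemma gpow_coeff_one (k : ℕ) (hk : 2 ≤ k) : ((gpoly n) ^ k).coeff 1 = 0 := by
  obtain ⟨h, hh⟩ := (Polynomial.X_dvd_iff).mpr (gpoly_coeff_zero n)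
  have : (gpoly n) ^ k = (Polynomial.X ^ (k - 2) * h ^ k) * Polynomial.X ^ 2 := by
    rw [hh, mul_pow]
    have hx : (Polynomial.X : Polynomial ℚ) ^ k = Polynomial.X ^ (k - 2) * Polynomial.X ^ 2 := by
      rw [← pow_add]; congr 1; omega
    rw [hx]; ring
  rw [this, Polynomial.coeff_mul_X_pow']
  simp

lemma psum_congr (hn : 1 ≤ n) (k : ℕ) (hk : 1 ≤ k) :
    π (∑ j, (1 - expNegTrunc n j) ^ k) = π (psum (Fin n) ℚ k) := by
  have h1 : (∑ j, (1 - expNegTrunc n j) ^ k) =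
      ∑ j, Polynomial.aeval (X j) ((gpoly n) ^ k) := by
    refine Finset.sum_congr rfl fun j _ => ?_
    rw [map_pow, aeval_gpoly]
  rw [h1, key, gpow_coeff_zero n k hk]
  rcases eq_or_lt_of_le hk with h | h
  · subst h
    rw [pow_one, gpoly_coeff_one n hn]
    simp
  · rw [gpow_coeff_one n k (by omega)]
    have : π (psum (Fin n) ℚ k) = 0 :=
      Ideal.Quotient.eq_zero_iff_mem.mpr (psum_mem n (by omega))
    simp [this]

lemma esymm_quot_congr (hn : 1 ≤ n) (i : ℕ) :
    π ((aeval fun j => 1 - expNegTrunc n j) (esymm (Fin n) ℚ i)) = π (esymm (Fin n) ℚ i) := by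
  induction i using Nat.strong_induction_on with
  | _ i ih =>
  match i with
  | 0 => simp [esymm_zero]
  | (i + 1) =>
    have hu : IsUnit (((i + 1 : ℕ) : MvPolynomial (Fin n) ℚ ⧸ Idl n)) := by
      have h2 : ((i + 1 : ℕ) : MvPolynomial (Fin n) ℚ ⧸ Idl n) =
          algebraMap ℚ _ ((i + 1 : ℕ) : ℚ) := by rw [map_natCast]
      rw [h2]
      exact (isUnit_iff_ne_zero.mpr (by positivity)).map _
    refine hu.mul_left_cancel ?_
    have hN := congrArg (fun q => π ((aeval fun j => 1 - expNegTrunc n j) q))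
      (mul_esymm_eq_sum (Fin n) ℚ (i + 1))
    have hN2 := congrArg (fun q => π q) (mul_esymm_eq_sum (Fin n) ℚ (i + 1))
    simp only [map_mul, map_sum, map_pow, map_neg, map_one, map_natCast] at hN hN2
    rw [hN, hN2]
    refine congrArg (HMul.hMul _) ?_
    refine Finset.sum_congr rfl fun a ha => ?_
    obtain ⟨ha1, ha2⟩ := Finset.mem_filter.mp ha
    have hadd : a.1 + a.2 = i + 1 := Finset.HasAntidiagonal.mem_antidiagonal.mp ha1
    have e1 : π ((aeval fun j => 1 - expNegTrunc n j) (psum (Fin n) ℚ a.2)) =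
        π (psum (Fin n) ℚ a.2) := by
      have hsum : (aeval fun j => 1 - expNegTrunc n j) (psum (Fin n) ℚ a.2) =
          ∑ j, (1 - expNegTrunc n j) ^ a.2 := by
        simp [psum]
      rw [hsum]
      exact psum_congr n hn a.2 (by omega)
    rw [ih a.1 (by omega), e1]

end EsymmAux

theorem esymm_one_sub_exp_congr (n : ℕ) (hn : 1 ≤ n) (i : ℕ) (hi : 1 ≤ i) :
    esymmAt (fun j => 1 - expNegTrunc n j) i - esymmAt (fun j => X j) i ∈
      Ideal.span ((fun k => MvPolynomial.psum (Fin n) ℚ k) '' (Set.Icc 2 n)) ⊔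
        (Ideal.span (Set.range (X : Fin n → MvPolynomial (Fin n) ℚ))) ^ (n + 1) := by
  show _ ∈ EsymmAux.Idl n
  have h1 : esymmAt (fun j => 1 - expNegTrunc n j) i =
      (aeval fun j => 1 - expNegTrunc n j) (esymm (Fin n) ℚ i) := by
    simp [esymmAt, esymm, map_sum, map_prod]
  have h2 : esymmAt (fun j => (X j : MvPolynomial (Fin n) ℚ)) i = esymm (Fin n) ℚ i := rfl
  rw [h1, h2]
  exact Ideal.Quotient.eq.mp (EsymmAux.esymm_quot_congr n hn i)
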